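/- Let (X,d) be a discrete metric space of bounded geometry. If X has Yu's property A, then X has naive property A; that is, for any R, ε > 0 there exists a family {Ã_x}_{x∈X} of finite non-empty subsets of X itself and an S > 0 such that |Ã_x △ Ã_y| / |Ã_x ∩ Ã_y| < ε whenever d(x,y) ≤ R, and Ã_x ⊆ B(x,S) for all x ∈ X. -/

import Mathlib

/-- A metric space is (uniformly) discrete if the distances between distinct points
are bounded below by a positive constant. -/
def UniformlyDiscrete (X : Type*) [MetricSpace X] : Prop :=
  ∃ c : ℝ, 0 < c ∧ ∀ x y : X, x ≠ y → c ≤ dist x y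

/-- A metric space has bounded geometry if for every `R > 0` the closed balls of radius `R`
are finite, of uniformly bounded cardinality. -/
def BoundedGeometry (X : Type*) [MetricSpace X] : Prop :=
  ∀ R : ℝ, 0 < R → ∃ N : ℕ, ∀ x : X,
    (Metric.closedBall x R).Finite ∧ (Metric.closedBall x R).ncard ≤ N

/-- Yu's property A. -/
def HasPropertyA (X : Type*) [MetricSpace X] [DecidableEq X] : Prop :=
  ∀ R : ℝ, 0 < R → ∀ ε : ℝ, 0 < ε →
    ∃ (A : X → Finset (X × ℕ)) (S : ℝ), 0 < S ∧
      (∀ x : X, (A x).Nonempty) ∧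
      (∀ x y : X, dist x y ≤ R →
        ((symmDiff (A x) (A y)).card : ℝ) < ε * ((A x ∩ A y).card : ℝ)) ∧
      (∀ x : X, ∀ p ∈ A x, dist x p.1 ≤ S)

section THEPROOF

namespace NaiveAux

open Finset

section Rch
variable {X : Type*} [DecidableEq X] (B : X → Finset X)

def rchFn : ℕ → X → Finset X
  | 0, x => {x}
  | k+1, x => (rchFn k x).biUnion B

variable {B}

lemma rchFn_zero (x : X) : rchFn B 0 x = {x} := rfl
lemma rchFn_succ (k : ℕ) (x : X) : rchFn B (k+1) x = (rchFn B k x).biUnion B := rfl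

lemma rchFn_self (hB : ∀ z, z ∈ B z) (k : ℕ) (x : X) : x ∈ rchFn B k x := by
  induction k with
  | zero => simp [rchFn_zero]
  | succ k ih => rw [rchFn_succ]; exact mem_biUnion.2 ⟨x, ih, hB x⟩

lemma rchFn_subset_succ (hB : ∀ z, z ∈ B z) (k : ℕ) (x : X) :
    rchFn B k x ⊆ rchFn B (k+1) x := by
  intro a ha; rw [rchFn_succ]; exact mem_biUnion.2 ⟨a, ha, hB a⟩

lemma rchFn_mono (hB : ∀ z, z ∈ B z) {k k' : ℕ} (h : k ≤ k') (x : X) :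
    rchFn B k x ⊆ rchFn B k' x := by
  induction k', h using Nat.le_induction with
  | base => exact Finset.Subset.refl _
  | succ n hn ih => exact ih.trans (rchFn_subset_succ hB n x)

lemma rchFn_stab {k : ℕ} {x : X} (h : rchFn B (k+1) x = rchFn B k x) (j : ℕ) :
    rchFn B (k+j) x = rchFn B k x := by
  induction j with
  | zero => rfl
  | succ j ih =>
    have : k + (j+1) = (k+j) + 1 := rfl
    rw [this, rchFn_succ, ih, ← rchFn_succ, h]

lemma rchFn_card (hB : ∀ z, z ∈ B z) (x : X) :
    ∀ k : ℕ, (∃ j, j < k ∧ rchFn B (j+1) x = rchFn B j x) ∨ k + 1 ≤ (rchFn B k x).card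
  | 0 => Or.inr (by simp [rchFn_zero])
  | (k+1) => by
    rcases rchFn_card hB x k with ⟨j, hj, he⟩ | h
    · exact Or.inl ⟨j, by omega, he⟩
    · by_cases he : rchFn B (k+1) x = rchFn B k x
      · exact Or.inl ⟨k, Nat.lt_succ_self k, he⟩
      · right
        have hss : rchFn B k x ⊂ rchFn B (k+1) x :=
          (rchFn_subset_succ hB k x).ssubset_of_ne (Ne.symm he)
        have := Finset.card_lt_card hss
        omega

lemma rchFn_step_of_mem {x y : X} (hm : x ∈ B y) :
    ∀ k : ℕ, rchFn B k x ⊆ rchFn B (k+1) y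
  | 0 => by
    intro a ha
    rw [rchFn_zero, Finset.mem_singleton] at ha
    subst ha
    rw [rchFn_succ, rchFn_zero]
    exact mem_biUnion.2 ⟨y, Finset.mem_singleton_self y, hm⟩
  | (k+1) => by
    rw [rchFn_succ, rchFn_succ]
    exact biUnion_subset_biUnion_of_subset_left _ (rchFn_step_of_mem hm k)

lemma rchFn_closed {k : ℕ} {x : X} (h : rchFn B (k+1) x = rchFn B k x)
    {y z : X} (hy : y ∈ rchFn B k x) (hz : z ∈ B y) : z ∈ rchFn B k x := by
  rw [← h, rchFn_succ]; exact mem_biUnion.2 ⟨y, hy, hz⟩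

lemma rchFn_eq_of_small (hB : ∀ z, z ∈ B z) {Q : ℕ} {x y : X}
    (hsm : (rchFn B Q x).card ≤ Q) (hxy : y ∈ B x) (hyx : x ∈ B y) :
    rchFn B Q y = rchFn B Q x := by
  obtain ⟨j, hjQ, hst⟩ := (rchFn_card hB x Q).resolve_right (by omega)
  have hQx : rchFn B Q x = rchFn B j x := by
    have := rchFn_stab hst (Q - j); rwa [Nat.add_sub_cancel' hjQ.le] at this
  have hyC : ∀ k, rchFn B k y ⊆ rchFn B j x := by
    intro k
    induction k with
    | zero =>
      intro a ha
      rw [rchFn_zero, Finset.mem_singleton] at ha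
      subst ha
      exact rchFn_closed hst (rchFn_self hB j x) hxy
    | succ k ih =>
      rw [rchFn_succ]
      intro a ha
      obtain ⟨b, hb, hab⟩ := mem_biUnion.1 ha
      exact rchFn_closed hst (ih hb) hab
  apply Finset.Subset.antisymm
  · exact (hyC Q).trans (le_of_eq hQx.symm)
  · rw [hQx]
    exact (rchFn_step_of_mem hyx j).trans (rchFn_mono hB (by omega) y)

end Rch

section RchDist
variable {X : Type*} [MetricSpace X] [DecidableEq X] {B : X → Finset X} {R : ℝ}

lemma rchFn_dist (hBd : ∀ z w, w ∈ B z → dist z w ≤ R) (hR : 0 ≤ R) :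
    ∀ (k : ℕ) (x : X), ∀ w ∈ rchFn B k x, dist x w ≤ k * R := by
  intro k
  induction k with
  | zero =>
    intro x w hw
    rw [rchFn_zero, Finset.mem_singleton] at hw
    subst hw; simp
  | succ k ih =>
    intro x w hw
    rw [rchFn_succ] at hw
    obtain ⟨b, hb, hbw⟩ := mem_biUnion.1 hw
    have h1 := ih x b hb
    have h2 := hBd b w hbw
    calc dist x w ≤ dist x b + dist b w := dist_triangle _ _ _
      _ ≤ k * R + R := add_le_add h1 h2
      _ = (k+1 : ℕ) * R := by push_cast; ring

end RchDist

end NaiveAux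

namespace NaiveAux

open Finset

section Chain
variable {X : Type*} [DecidableEq X]

open Classical in
noncomputable def chainFn (BT BD : X → Finset X) (K : ℕ) : X → List X :=
  (IsWellFounded.wf (α := X) (r := WellOrderingRel)).fix fun y rec =>
    let avail := BT y \ (BD y).attach.biUnion fun z =>
      if h : WellOrderingRel z.1 y then (rec z.1 h).toFinset else ∅
    if K ≤ avail.card then avail.toList.take K else []

open Classical in
lemma chainFn_def (BT BD : X → Finset X) (K : ℕ) (y : X) : chainFn BT BD K y =
    (let avail := BT y \ (BD y).attach.biUnion fun z =>
      if h : WellOrderingRel z.1 y then (chainFn BT BD K z.1).toFinset else ∅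
     if K ≤ avail.card then avail.toList.take K else []) :=
  WellFounded.fix_eq _ _ _

variable {BT BD : X → Finset X} {K : ℕ}

lemma chainFn_nodup (y : X) : (chainFn BT BD K y).Nodup := by
  rw [chainFn_def]
  dsimp only
  split
  · exact ((List.take_sublist _ _).nodup (Finset.nodup_toList _))
  · exact List.nodup_nil

lemma chainFn_length_le (y : X) : (chainFn BT BD K y).length ≤ K := by
  rw [chainFn_def]
  dsimp only
  split
  · simp [List.length_take]
  · simp

lemma chainFn_mem_BT {y a : X} (ha : a ∈ chainFn BT BD K y) : a ∈ BT y := by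
  rw [chainFn_def] at ha
  dsimp only at ha
  split at ha
  · have := List.take_subset _ _ ha
    rw [Finset.mem_toList, Finset.mem_sdiff] at this
    exact this.1
  · simp at ha

open Classical in
lemma chainFn_disjoint_earlier {y z : X} (hzy : WellOrderingRel z y) (hzD : z ∈ BD y)
    {a : X} (ha : a ∈ chainFn BT BD K y) : a ∉ chainFn BT BD K z := by
  intro haz
  rw [chainFn_def] at ha
  dsimp only at ha
  split at ha
  · have hmem := List.take_subset _ _ ha
    rw [Finset.mem_toList, Finset.mem_sdiff] at hmem
    apply hmem.2
    refine Finset.mem_biUnion.2 ⟨⟨z, hzD⟩, Finset.mem_attach _ _, ?_⟩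
    rw [dif_pos hzy]
    exact List.mem_toFinset.2 haz
  · simp at ha

open Classical in
lemma chainFn_length_eq {y : X} (h : (BD y).card * K + K ≤ (BT y).card) :
    (chainFn BT BD K y).length = K := by
  rw [chainFn_def]
  dsimp only
  have hused : ((BD y).attach.biUnion fun z =>
      if h : WellOrderingRel z.1 y then (chainFn BT BD K z.1).toFinset else ∅).card
      ≤ (BD y).card * K := by
    refine le_trans Finset.card_biUnion_le ?_
    refine le_trans (Finset.sum_le_card_nsmul _ _ K ?_) ?_
    · intro z _
      split
      · exact le_trans (List.toFinset_card_le _) (chainFn_length_le _)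
      · simp
    · simp [Finset.card_attach, mul_comm]
  have havail : K ≤ (BT y \ (BD y).attach.biUnion fun z =>
      if h : WellOrderingRel z.1 y then (chainFn BT BD K z.1).toFinset else ∅).card := by
    have := Finset.le_card_sdiff ((BD y).attach.biUnion fun z =>
      if h : WellOrderingRel z.1 y then (chainFn BT BD K z.1).toFinset else ∅) (BT y)
    omega
  rw [if_pos havail]
  rw [List.length_take, Finset.length_toList]
  omega

lemma chainFn_disj {y z : X} (hne : y ≠ z) (hyD : y ∈ BD z) (hzD : z ∈ BD y) :
    Disjoint (chainFn BT BD K y).toFinset (chainFn BT BD K z).toFinset := by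
  rcases trichotomous_of WellOrderingRel y z with h | h | h
  · rw [Finset.disjoint_right]
    intro a haz hay
    exact chainFn_disjoint_earlier h hyD (List.mem_toFinset.1 haz) (List.mem_toFinset.1 hay)
  · exact absurd h hne
  · rw [Finset.disjoint_left]
    intro a hay haz
    exact chainFn_disjoint_earlier h hzD (List.mem_toFinset.1 hay) (List.mem_toFinset.1 haz)

end Chain

section Gtake
variable {X : Type*} [DecidableEq X]

def Gtake (l : List X) (j : ℕ) : Finset X := (l.take j).toFinset

@[simp] lemma Gtake_zero (l : List X) : Gtake l 0 = ∅ := by simp [Gtake]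

lemma Gtake_mono (l : List X) {j j' : ℕ} (h : j ≤ j') : Gtake l j ⊆ Gtake l j' := by
  intro a ha
  rw [Gtake, List.mem_toFinset] at ha ⊢
  have : l.take j = (l.take j').take j := by
    rw [List.take_take, min_eq_left h]
  rw [this] at ha
  exact List.take_subset _ _ ha

lemma Gtake_subset (l : List X) (j : ℕ) : Gtake l j ⊆ l.toFinset := by
  intro a ha
  rw [Gtake, List.mem_toFinset] at ha
  exact List.mem_toFinset.2 (List.take_subset _ _ ha)

lemma Gtake_card {l : List X} (h : l.Nodup) (j : ℕ) :
    (Gtake l j).card = min j l.length := by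
  rw [Gtake, List.toFinset_card_of_nodup ((List.take_sublist _ _).nodup h), List.length_take]

lemma Gtake_sdiff_card_le {l : List X} (h : l.Nodup) (a b : ℕ) :
    (Gtake l a \ Gtake l b).card ≤ a - b := by
  rcases le_total a b with hab | hab
  · have : Gtake l a \ Gtake l b = ∅ := Finset.sdiff_eq_empty_iff_subset.2 (Gtake_mono l hab)
    simp [this]
  · rw [Finset.card_sdiff_of_subset (Gtake_mono l hab), Gtake_card h, Gtake_card h]
    omega

end Gtake

end NaiveAux

namespace NaiveAux

lemma natAbsCast (a b : ℕ) : (((a - b) + (b - a) : ℕ) : ℝ) = |(a:ℝ) - (b:ℝ)| := by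
  rcases le_total a b with h | h
  · rw [Nat.sub_eq_zero_of_le h, abs_sub_comm,
      abs_of_nonneg (sub_nonneg.2 (by exact_mod_cast h))]
    push_cast [h]
    ring
  · rw [Nat.sub_eq_zero_of_le h,
      abs_of_nonneg (sub_nonneg.2 (by exact_mod_cast h))]
    push_cast [h]
    ring

lemma absEst {a b mx my TX TY KK : ℝ} (hTX : 0 < TX) (hTY : 0 < TY)
    (hKK : 0 ≤ KK) (h1 : KK*mx ≤ a*TX) (h2 : a*TX ≤ KK*mx + TX)
    (h3 : KK*my ≤ b*TY) (h4 : b*TY ≤ KK*my + TY) :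
    |a - b| * (TX*TY) ≤ TX*TY + KK * |mx*TY - my*TX| := by
  have habs : |a - b| * (TX*TY) = |(a-b) * (TX*TY)| := by
    rw [abs_mul, abs_of_nonneg (le_of_lt (mul_pos hTX hTY))]
  rw [habs]
  have hc1 : KK * (mx*TY - my*TX) ≤ KK * |mx*TY - my*TX| :=
    mul_le_mul_of_nonneg_left (le_abs_self _) hKK
  have hc2 : KK * (-(mx*TY - my*TX)) ≤ KK * |mx*TY - my*TX| :=
    mul_le_mul_of_nonneg_left (neg_le_abs _) hKK
  have p1 : (a*TX)*TY ≤ (KK*mx + TX)*TY := mul_le_mul_of_nonneg_right h2 hTY.le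
  have p2 : KK*my*TX ≤ (b*TY)*TX := mul_le_mul_of_nonneg_right h3 hTX.le
  have p3 : (b*TY)*TX ≤ (KK*my + TY)*TX := mul_le_mul_of_nonneg_right h4 hTX.le
  have p4 : KK*mx*TY ≤ (a*TX)*TY := mul_le_mul_of_nonneg_right h1 hTY.le
  have e : (a - b) * (TX*TY) = (a*TX)*TY - (b*TY)*TX := by ring
  rw [abs_le]
  constructor
  · nlinarith
  · nlinarith

-- division helpers
lemma ndiv_le {K m T : ℕ} (hm : m ≤ T) (hT : 0 < T) : (K*m + T - 1)/T ≤ K := by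
  have h1 : K * m ≤ K * T := Nat.mul_le_mul_left K hm
  have h4 : (K+1) * T = K * T + T := by ring
  have : K*m + T - 1 < (K+1) * T := by omega
  have := (Nat.div_lt_iff_lt_mul hT).2 this
  omega

lemma ndiv_low {K m T : ℕ} (hT : 0 < T) : K*m ≤ (K*m + T - 1)/T * T := by
  generalize K * m = km
  have h1 := Nat.div_add_mod (km + T - 1) T
  have h3 := Nat.mod_lt (km + T - 1) hT
  set q := (km + T - 1) / T with hq
  have h5 : T * q = q * T := Nat.mul_comm _ _
  omega

lemma ndiv_hi {K m T : ℕ} (hT : 0 < T) : (K*m + T - 1)/T * T ≤ K*m + T := by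
  have := Nat.div_mul_le_self (K*m + T - 1) T
  omega

lemma ndiv_zero {K T : ℕ} (hT : 0 < T) : (K*0 + T - 1)/T = 0 :=
  Nat.div_eq_of_lt (by omega)

set_option maxHeartbeats 1000000 in
lemma bigcase {X : Type*} [DecidableEq X]
    (ε ε' δ : ℝ) (K N' : ℕ)
    (hε'pos : 0 < ε') (hε'leε : ε' ≤ ε) (hε'le1 : ε' ≤ 1)
    (hδ : δ = ε'/16) (hKpos : 0 < K) (hK8 : 8*((N':ℝ)+1) ≤ ε' * (K:ℝ))
    (sx sy U : Finset X) (hU : U = sx ∪ sy) (hNu : ((U.card : ℕ):ℝ) ≤ (N':ℝ))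
    (mx my nx ny : X → ℕ) (Tx Ty d1 d2 iA : ℕ)
    (hTxpos : 0 < Tx) (hTypos : 0 < Ty)
    (hmx0 : ∀ z, z ∉ sx → mx z = 0) (hmy0 : ∀ z, z ∉ sy → my z = 0)
    (hnx : ∀ z, nx z = (K * mx z + Tx - 1) / Tx)
    (hny : ∀ z, ny z = (K * my z + Ty - 1) / Ty)
    (hmxT : ∀ z, mx z ≤ Tx) (hmyT : ∀ z, my z ≤ Ty)
    (hfib1 : ∑ z ∈ U, (mx z - my z) ≤ d1)
    (hfib2 : ∑ z ∈ U, (my z - mx z) ≤ d2)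
    (hfibi : iA ≤ ∑ z ∈ U, min (mx z) (my z))
    (hfibTy : ∑ z ∈ U, my z = Ty)
    (hTxle : Tx ≤ iA + d1) (hTyle : Ty ≤ iA + d2)
    (hiATx : iA ≤ Tx) (hiATy : iA ≤ Ty)
    (hiApos : 0 < iA)
    (hPAr : (d1:ℝ) + (d2:ℝ) < δ * (iA:ℝ))
    (ch : X → List X)
    (hchnd : ∀ z, (ch z).Nodup)
    (hlen : ∀ z ∈ U, (ch z).length = K)
    (hdisj : ∀ z ∈ U, ∀ z' ∈ U, z ≠ z' → Disjoint (ch z).toFinset (ch z').toFinset)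
    (Fx Fy : Finset X)
    (hFx : Fx = sx.biUnion fun z => Gtake (ch z) (nx z))
    (hFy : Fy = sy.biUnion fun z => Gtake (ch z) (ny z)) :
    ((symmDiff Fx Fy).card : ℝ) < ε * ((Fx ∩ Fy).card : ℝ) := by
  have hδpos : 0 < δ := by rw [hδ]; positivity
  have hspU_x : sx ⊆ U := hU ▸ Finset.subset_union_left
  have hspU_y : sy ⊆ U := hU ▸ Finset.subset_union_right
  -- basic nf facts
  have hnK : ∀ w : X, ∀ (n m : X → ℕ) (T : ℕ), (∀ z, n z = (K * m z + T - 1)/T) →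
      (∀ z, m z ≤ T) → 0 < T → n w ≤ K := by
    intro w n m T hn hm hT
    rw [hn w]; exact ndiv_le (hm w) hT
  have hnxK : ∀ z, nx z ≤ K := fun z => by rw [hnx z]; exact ndiv_le (hmxT z) hTxpos
  have hnyK : ∀ z, ny z ≤ K := fun z => by rw [hny z]; exact ndiv_le (hmyT z) hTypos
  have hnx0 : ∀ z, z ∉ sx → nx z = 0 := by
    intro z hz; rw [hnx z, hmx0 z hz]; exact ndiv_zero hTxpos
  have hny0 : ∀ z, z ∉ sy → ny z = 0 := by
    intro z hz; rw [hny z, hmy0 z hz]; exact ndiv_zero hTypos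
  have hnxlow : ∀ z, K * mx z ≤ nx z * Tx := fun z => by rw [hnx z]; exact ndiv_low hTxpos
  have hnylow : ∀ z, K * my z ≤ ny z * Ty := fun z => by rw [hny z]; exact ndiv_low hTypos
  have hnxhi : ∀ z, nx z * Tx ≤ K * mx z + Tx := fun z => by rw [hnx z]; exact ndiv_hi hTxpos
  have hnyhi : ∀ z, ny z * Ty ≤ K * my z + Ty := fun z => by rw [hny z]; exact ndiv_hi hTypos
  have hGc : ∀ z ∈ U, ∀ j, j ≤ K → (Gtake (ch z) j).card = j := by
    intro z hz j hj
    rw [Gtake_card (hchnd z), hlen z hz, min_eq_left hj]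
  -- symm diff bound
  have hsub1 : Fx \ Fy ⊆ U.biUnion fun z => Gtake (ch z) (nx z) \ Gtake (ch z) (ny z) := by
    intro a ha
    rw [Finset.mem_sdiff] at ha
    obtain ⟨haX, haY⟩ := ha
    rw [hFx] at haX
    obtain ⟨z, hz, haG⟩ := Finset.mem_biUnion.1 haX
    refine Finset.mem_biUnion.2 ⟨z, hspU_x hz, Finset.mem_sdiff.2 ⟨haG, ?_⟩⟩
    intro haG'
    by_cases hzy : z ∈ sy
    · exact haY (by rw [hFy]; exact Finset.mem_biUnion.2 ⟨z, hzy, haG'⟩)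
    · simp only [hny0 z hzy, Gtake_zero, Finset.notMem_empty] at haG'
  have hsub2 : Fy \ Fx ⊆ U.biUnion fun z => Gtake (ch z) (ny z) \ Gtake (ch z) (nx z) := by
    intro a ha
    rw [Finset.mem_sdiff] at ha
    obtain ⟨haY, haX⟩ := ha
    rw [hFy] at haY
    obtain ⟨z, hz, haG⟩ := Finset.mem_biUnion.1 haY
    refine Finset.mem_biUnion.2 ⟨z, hspU_y hz, Finset.mem_sdiff.2 ⟨haG, ?_⟩⟩
    intro haG'
    by_cases hzx : z ∈ sx
    · exact haX (by rw [hFx]; exact Finset.mem_biUnion.2 ⟨z, hzx, haG'⟩)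
    · simp only [hnx0 z hzx, Gtake_zero, Finset.notMem_empty] at haG'
  have hdn : (symmDiff Fx Fy).card ≤ ∑ z ∈ U, ((nx z - ny z) + (ny z - nx z)) := by
    rw [symmDiff_def, Finset.sup_eq_union,
      Finset.card_union_of_disjoint disjoint_sdiff_sdiff, Finset.sum_add_distrib]
    have b1 : (Fx \ Fy).card ≤ ∑ z ∈ U, (nx z - ny z) := by
      refine le_trans (Finset.card_le_card hsub1) (le_trans Finset.card_biUnion_le ?_)
      exact Finset.sum_le_sum fun z _ => Gtake_sdiff_card_le (hchnd z) _ _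
    have b2 : (Fy \ Fx).card ≤ ∑ z ∈ U, (ny z - nx z) := by
      refine le_trans (Finset.card_le_card hsub2) (le_trans Finset.card_biUnion_le ?_)
      exact Finset.sum_le_sum fun z _ => Gtake_sdiff_card_le (hchnd z) _ _
    exact add_le_add b1 b2
  -- intersection bound
  have hGdisj : ∀ z ∈ U, ∀ z' ∈ U, z ≠ z' →
      Disjoint (Gtake (ch z) (min (nx z) (ny z))) (Gtake (ch z') (min (nx z') (ny z'))) := by
    intro z hz z' hz' hne'
    exact Finset.disjoint_of_subset_left (Gtake_subset _ _)
      (Finset.disjoint_of_subset_right (Gtake_subset _ _) (hdisj z hz z' hz' hne'))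
  have hUsub : (U.biUnion fun z => Gtake (ch z) (min (nx z) (ny z))) ⊆ Fx ∩ Fy := by
    intro a ha
    obtain ⟨z, hz, haG⟩ := Finset.mem_biUnion.1 ha
    rw [Finset.mem_inter]
    constructor
    · by_cases hzx : z ∈ sx
      · rw [hFx]
        exact Finset.mem_biUnion.2 ⟨z, hzx, Gtake_mono _ (min_le_left _ _) haG⟩
      · simp only [hnx0 z hzx, Nat.zero_min, Gtake_zero, Finset.notMem_empty] at haG
    · by_cases hzy : z ∈ sy
      · rw [hFy]
        exact Finset.mem_biUnion.2 ⟨z, hzy, Gtake_mono _ (min_le_right _ _) haG⟩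
      · simp only [hny0 z hzy, Nat.min_zero, Gtake_zero, Finset.notMem_empty] at haG
  have hiN : ∑ z ∈ U, min (nx z) (ny z) ≤ (Fx ∩ Fy).card := by
    have e1 : ∑ z ∈ U, min (nx z) (ny z)
        = ∑ z ∈ U, (Gtake (ch z) (min (nx z) (ny z))).card := by
      refine Finset.sum_congr rfl fun z hz => ?_
      rw [hGc z hz _ (le_trans (min_le_left _ _) (hnxK z))]
    rw [e1, ← Finset.card_biUnion hGdisj]
    exact Finset.card_le_card hUsub
  -- real estimates : symmdiff side
  have hTXpos : (0:ℝ) < (Tx:ℝ) := by exact_mod_cast hTxpos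
  have hTYpos : (0:ℝ) < (Ty:ℝ) := by exact_mod_cast hTypos
  have hcast_lowx : ∀ z, (K:ℝ) * (mx z:ℝ) ≤ (nx z:ℝ) * (Tx:ℝ) := by
    intro z; exact_mod_cast hnxlow z
  have hcast_hix : ∀ z, (nx z:ℝ) * (Tx:ℝ) ≤ (K:ℝ) * (mx z:ℝ) + (Tx:ℝ) := by
    intro z; exact_mod_cast hnxhi z
  have hcast_lowy : ∀ z, (K:ℝ) * (my z:ℝ) ≤ (ny z:ℝ) * (Ty:ℝ) := by
    intro z; exact_mod_cast hnylow z
  have hcast_hiy : ∀ z, (ny z:ℝ) * (Ty:ℝ) ≤ (K:ℝ) * (my z:ℝ) + (Ty:ℝ) := by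
    intro z; exact_mod_cast hnyhi z
  have habsz : ∀ z ∈ U, |(nx z:ℝ) - (ny z:ℝ)| * ((Tx:ℝ) * (Ty:ℝ))
      ≤ (Tx:ℝ) * (Ty:ℝ) + (K:ℝ) * |(mx z:ℝ) * (Ty:ℝ) - (my z:ℝ) * (Tx:ℝ)| := by
    intro z _
    exact absEst hTXpos hTYpos (Nat.cast_nonneg K) (hcast_lowx z) (hcast_hix z)
      (hcast_lowy z) (hcast_hiy z)
  have hsum1 : (∑ z ∈ U, |(nx z:ℝ) - (ny z:ℝ)|) * ((Tx:ℝ) * (Ty:ℝ))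
      ≤ (U.card:ℝ) * ((Tx:ℝ) * (Ty:ℝ))
        + (K:ℝ) * ∑ z ∈ U, |(mx z:ℝ) * (Ty:ℝ) - (my z:ℝ) * (Tx:ℝ)| := by
    rw [Finset.sum_mul]
    calc ∑ z ∈ U, |(nx z:ℝ) - (ny z:ℝ)| * ((Tx:ℝ) * (Ty:ℝ))
        ≤ ∑ z ∈ U, ((Tx:ℝ) * (Ty:ℝ)
          + (K:ℝ) * |(mx z:ℝ) * (Ty:ℝ) - (my z:ℝ) * (Tx:ℝ)|) :=
        Finset.sum_le_sum habsz
      _ = (U.card:ℝ) * ((Tx:ℝ) * (Ty:ℝ))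
          + (K:ℝ) * ∑ z ∈ U, |(mx z:ℝ) * (Ty:ℝ) - (my z:ℝ) * (Tx:ℝ)| := by
        rw [Finset.sum_add_distrib, Finset.sum_const, nsmul_eq_mul, ← Finset.mul_sum]
  have hcrossz : ∀ z ∈ U, |(mx z:ℝ) * (Ty:ℝ) - (my z:ℝ) * (Tx:ℝ)|
      ≤ |(mx z:ℝ) - (my z:ℝ)| * (Ty:ℝ) + (my z:ℝ) * |(Ty:ℝ) - (Tx:ℝ)| := by
    intro z _
    have e : (mx z:ℝ) * (Ty:ℝ) - (my z:ℝ) * (Tx:ℝ)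
        = ((mx z:ℝ) - (my z:ℝ)) * (Ty:ℝ) + (my z:ℝ) * ((Ty:ℝ) - (Tx:ℝ)) := by ring
    have e2 : |((mx z:ℝ) - (my z:ℝ)) * (Ty:ℝ)| = |(mx z:ℝ) - (my z:ℝ)| * (Ty:ℝ) := by
      rw [abs_mul, abs_of_nonneg (le_of_lt hTYpos)]
    have e3 : |(my z:ℝ) * ((Ty:ℝ) - (Tx:ℝ))| = (my z:ℝ) * |(Ty:ℝ) - (Tx:ℝ)| := by
      rw [abs_mul, abs_of_nonneg (show (0:ℝ) ≤ (my z:ℝ) from Nat.cast_nonneg _)]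
    rw [e]
    exact (abs_add_le _ _).trans (le_of_eq (by rw [e2, e3]))
  have hsabsm : ∑ z ∈ U, |(mx z:ℝ) - (my z:ℝ)| ≤ (d1:ℝ) + (d2:ℝ) := by
    have e : ∀ z ∈ U, |(mx z:ℝ) - (my z:ℝ)|
        = (((mx z - my z) + (my z - mx z) : ℕ) : ℝ) := fun z _ => (natAbsCast _ _).symm
    rw [Finset.sum_congr rfl e, ← Nat.cast_sum, Finset.sum_add_distrib]
    have h : ∑ z ∈ U, (mx z - my z) + ∑ z ∈ U, (my z - mx z) ≤ d1 + d2 :=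
      add_le_add hfib1 hfib2
    calc ((∑ z ∈ U, (mx z - my z) + ∑ z ∈ U, (my z - mx z) : ℕ) : ℝ)
        ≤ ((d1 + d2 : ℕ) : ℝ) := by exact_mod_cast h
      _ = (d1:ℝ) + (d2:ℝ) := by push_cast; ring
  have hTabs : |(Ty:ℝ) - (Tx:ℝ)| ≤ (d1:ℝ) + (d2:ℝ) := by
    have c1 : (Tx:ℝ) ≤ (iA:ℝ) + (d1:ℝ) := by exact_mod_cast hTxle
    have c2 : (Ty:ℝ) ≤ (iA:ℝ) + (d2:ℝ) := by exact_mod_cast hTyle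
    have c3 : (iA:ℝ) ≤ (Tx:ℝ) := by exact_mod_cast hiATx
    have c4 : (iA:ℝ) ≤ (Ty:ℝ) := by exact_mod_cast hiATy
    have h1 : (0:ℝ) ≤ (d1:ℝ) := Nat.cast_nonneg _
    have h2 : (0:ℝ) ≤ (d2:ℝ) := Nat.cast_nonneg _
    rw [abs_le]
    constructor
    · linarith
    · linarith
  have hfibyr : ∑ z ∈ U, (my z : ℝ) = (Ty : ℝ) := by
    rw [← hfibTy, Nat.cast_sum]
  have hsumcross : ∑ z ∈ U, |(mx z:ℝ) * (Ty:ℝ) - (my z:ℝ) * (Tx:ℝ)|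
      ≤ 2 * (Ty:ℝ) * ((d1:ℝ) + (d2:ℝ)) := by
    calc ∑ z ∈ U, |(mx z:ℝ) * (Ty:ℝ) - (my z:ℝ) * (Tx:ℝ)|
        ≤ ∑ z ∈ U, (|(mx z:ℝ) - (my z:ℝ)| * (Ty:ℝ) + (my z:ℝ) * |(Ty:ℝ) - (Tx:ℝ)|) :=
        Finset.sum_le_sum hcrossz
      _ = (∑ z ∈ U, |(mx z:ℝ) - (my z:ℝ)|) * (Ty:ℝ)
          + (∑ z ∈ U, (my z:ℝ)) * |(Ty:ℝ) - (Tx:ℝ)| := by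
        rw [Finset.sum_add_distrib, ← Finset.sum_mul, ← Finset.sum_mul]
      _ ≤ ((d1:ℝ) + (d2:ℝ)) * (Ty:ℝ) + (Ty:ℝ) * ((d1:ℝ) + (d2:ℝ)) := by
        rw [hfibyr]
        exact add_le_add (mul_le_mul_of_nonneg_right hsabsm (le_of_lt hTYpos))
          (mul_le_mul_of_nonneg_left hTabs (le_of_lt hTYpos))
      _ = 2 * (Ty:ℝ) * ((d1:ℝ) + (d2:ℝ)) := by ring
  have hdn_r : ((symmDiff Fx Fy).card : ℝ) ≤ ∑ z ∈ U, |(nx z:ℝ) - (ny z:ℝ)| := by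
    calc ((symmDiff Fx Fy).card : ℝ)
        ≤ ((∑ z ∈ U, ((nx z - ny z) + (ny z - nx z)) : ℕ) : ℝ) := by exact_mod_cast hdn
      _ = ∑ z ∈ U, |(nx z:ℝ) - (ny z:ℝ)| := by
        rw [Nat.cast_sum]
        exact Finset.sum_congr rfl fun z _ => natAbsCast _ _
  have hkey1' : ((symmDiff Fx Fy).card : ℝ) < (N' : ℝ) + 2*(K:ℝ)*δ := by
    have h2 : (∑ z ∈ U, |(nx z:ℝ) - (ny z:ℝ)|) * ((Tx:ℝ) * (Ty:ℝ))
        ≤ (U.card:ℝ) * ((Tx:ℝ) * (Ty:ℝ)) + (K:ℝ) * (2 * (Ty:ℝ) * ((d1:ℝ) + (d2:ℝ))) :=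
      le_trans hsum1 (add_le_add_right
        (mul_le_mul_of_nonneg_left hsumcross (Nat.cast_nonneg K)) _)
    have h3 : ((∑ z ∈ U, |(nx z:ℝ) - (ny z:ℝ)|) * (Tx:ℝ)) * (Ty:ℝ)
        ≤ ((U.card:ℝ) * (Tx:ℝ) + 2*(K:ℝ)*((d1:ℝ) + (d2:ℝ))) * (Ty:ℝ) := by
      have e1 : ((∑ z ∈ U, |(nx z:ℝ) - (ny z:ℝ)|) * (Tx:ℝ)) * (Ty:ℝ)
          = (∑ z ∈ U, |(nx z:ℝ) - (ny z:ℝ)|) * ((Tx:ℝ) * (Ty:ℝ)) := by ring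
      have e2 : ((U.card:ℝ) * (Tx:ℝ) + 2*(K:ℝ)*((d1:ℝ) + (d2:ℝ))) * (Ty:ℝ)
          = (U.card:ℝ) * ((Tx:ℝ) * (Ty:ℝ)) + (K:ℝ) * (2 * (Ty:ℝ) * ((d1:ℝ) + (d2:ℝ))) := by
        ring
      rw [e1, e2]
      exact h2
    have h4 : (∑ z ∈ U, |(nx z:ℝ) - (ny z:ℝ)|) * (Tx:ℝ)
        ≤ (U.card:ℝ) * (Tx:ℝ) + 2*(K:ℝ)*((d1:ℝ) + (d2:ℝ)) :=
      le_of_mul_le_mul_right h3 hTYpos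
    have hKpos' : (0:ℝ) < 2*(K:ℝ) := by
      have : (0:ℝ) < (K:ℝ) := by exact_mod_cast hKpos
      linarith
    have hstep : 2*(K:ℝ)*((d1:ℝ) + (d2:ℝ)) < 2*(K:ℝ)*(δ * (Tx:ℝ)) := by
      apply mul_lt_mul_of_pos_left _ hKpos'
      calc (d1:ℝ) + (d2:ℝ) < δ * (iA:ℝ) := hPAr
        _ ≤ δ * (Tx:ℝ) := by
          apply mul_le_mul_of_nonneg_left _ hδpos.le
          exact_mod_cast hiATx
    have hdns : ((symmDiff Fx Fy).card : ℝ) * (Tx:ℝ)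
        ≤ (∑ z ∈ U, |(nx z:ℝ) - (ny z:ℝ)|) * (Tx:ℝ) :=
      mul_le_mul_of_nonneg_right hdn_r (le_of_lt hTXpos)
    have hNux : (U.card:ℝ) * (Tx:ℝ) ≤ (N':ℝ) * (Tx:ℝ) :=
      mul_le_mul_of_nonneg_right hNu (le_of_lt hTXpos)
    have h5 : ((symmDiff Fx Fy).card : ℝ) * (Tx:ℝ) < ((N' : ℝ) + 2*(K:ℝ)*δ) * (Tx:ℝ) := by
      calc ((symmDiff Fx Fy).card : ℝ) * (Tx:ℝ)
          ≤ (U.card:ℝ) * (Tx:ℝ) + 2*(K:ℝ)*((d1:ℝ) + (d2:ℝ)) := le_trans hdns h4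
        _ < (N':ℝ) * (Tx:ℝ) + 2*(K:ℝ)*(δ * (Tx:ℝ)) := by linarith
        _ = ((N' : ℝ) + 2*(K:ℝ)*δ) * (Tx:ℝ) := by ring
    exact lt_of_mul_lt_mul_right h5 (le_of_lt hTXpos)
  -- intersection lower bound
  have hminz : ∀ z ∈ U, K * min (mx z) (my z) * min Tx Ty
      ≤ min (nx z) (ny z) * (Tx * Ty) := by
    intro z _
    rcases le_total (nx z) (ny z) with h | h
    · rw [min_eq_left h]
      calc K * min (mx z) (my z) * min Tx Ty
          ≤ (K * mx z) * Ty :=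
          Nat.mul_le_mul (Nat.mul_le_mul_left _ (min_le_left _ _)) (min_le_right _ _)
        _ ≤ (nx z * Tx) * Ty := Nat.mul_le_mul_right _ (hnxlow z)
        _ = nx z * (Tx * Ty) := by ring
    · rw [min_eq_right h]
      calc K * min (mx z) (my z) * min Tx Ty
          ≤ (K * my z) * Tx :=
          Nat.mul_le_mul (Nat.mul_le_mul_left _ (min_le_right _ _)) (min_le_left _ _)
        _ ≤ (ny z * Ty) * Tx := Nat.mul_le_mul_right _ (hnylow z)
        _ = ny z * (Tx * Ty) := by ring
  have hminsum : K * (∑ z ∈ U, min (mx z) (my z)) * min Tx Ty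
      ≤ (Fx ∩ Fy).card * (Tx * Ty) := by
    calc K * (∑ z ∈ U, min (mx z) (my z)) * min Tx Ty
        = ∑ z ∈ U, K * min (mx z) (my z) * min Tx Ty := by
          rw [Finset.mul_sum, Finset.sum_mul]
      _ ≤ ∑ z ∈ U, min (nx z) (ny z) * (Tx * Ty) := Finset.sum_le_sum hminz
      _ = (∑ z ∈ U, min (nx z) (ny z)) * (Tx * Ty) := (Finset.sum_mul _ _ _).symm
      _ ≤ (Fx ∩ Fy).card * (Tx * Ty) := Nat.mul_le_mul_right _ hiN
  have hKSm : K * (∑ z ∈ U, min (mx z) (my z))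
      ≤ (Fx ∩ Fy).card * ((∑ z ∈ U, min (mx z) (my z)) + (d1 + d2)) := by
    rcases le_total Tx Ty with h | h
    · have e : min Tx Ty = Tx := min_eq_left h
      rw [e] at hminsum
      have h1 : (K * (∑ z ∈ U, min (mx z) (my z))) * Tx
          ≤ ((Fx ∩ Fy).card * Ty) * Tx := by
        calc (K * (∑ z ∈ U, min (mx z) (my z))) * Tx
            = K * (∑ z ∈ U, min (mx z) (my z)) * Tx := by ring
          _ ≤ (Fx ∩ Fy).card * (Tx * Ty) := hminsum
          _ = ((Fx ∩ Fy).card * Ty) * Tx := by ring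
      have h2 : K * (∑ z ∈ U, min (mx z) (my z)) ≤ (Fx ∩ Fy).card * Ty :=
        Nat.le_of_mul_le_mul_right h1 hTxpos
      refine h2.trans (Nat.mul_le_mul_left _ ?_)
      omega
    · have e : min Tx Ty = Ty := min_eq_right h
      rw [e] at hminsum
      have h1 : (K * (∑ z ∈ U, min (mx z) (my z))) * Ty
          ≤ ((Fx ∩ Fy).card * Tx) * Ty := by
        calc (K * (∑ z ∈ U, min (mx z) (my z))) * Ty
            = K * (∑ z ∈ U, min (mx z) (my z)) * Ty := by ring
          _ ≤ (Fx ∩ Fy).card * (Tx * Ty) := hminsum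
          _ = ((Fx ∩ Fy).card * Tx) * Ty := by ring
      have h2 : K * (∑ z ∈ U, min (mx z) (my z)) ≤ (Fx ∩ Fy).card * Tx :=
        Nat.le_of_mul_le_mul_right h1 hTypos
      refine h2.trans (Nat.mul_le_mul_left _ ?_)
      omega
  have hSm1 : 1 ≤ ∑ z ∈ U, min (mx z) (my z) := le_trans hiApos hfibi
  have hiFpos : 0 < (Fx ∩ Fy).card := by
    rcases Nat.eq_zero_or_pos (Fx ∩ Fy).card with h | h
    · rw [h, Nat.zero_mul] at hKSm
      have : 0 < K * (∑ z ∈ U, min (mx z) (my z)) := Nat.mul_pos hKpos hSm1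
      omega
    · exact h
  have hKr : (K:ℝ) < ((Fx ∩ Fy).card : ℝ) * (1 + δ) := by
    have c0 : (K:ℝ) * ((∑ z ∈ U, min (mx z) (my z) : ℕ):ℝ)
        ≤ ((Fx ∩ Fy).card : ℝ)
          * (((∑ z ∈ U, min (mx z) (my z) : ℕ):ℝ) + ((d1:ℝ) + (d2:ℝ))) := by
      exact_mod_cast hKSm
    have hiASmr : (iA : ℝ) ≤ ((∑ z ∈ U, min (mx z) (my z) : ℕ):ℝ) := by
      exact_mod_cast hfibi
    have hiFr : (0:ℝ) < ((Fx ∩ Fy).card : ℝ) := by exact_mod_cast hiFpos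
    have c1 : ((Fx ∩ Fy).card : ℝ)
        * (((∑ z ∈ U, min (mx z) (my z) : ℕ):ℝ) + ((d1:ℝ) + (d2:ℝ)))
        < ((Fx ∩ Fy).card : ℝ)
          * (((∑ z ∈ U, min (mx z) (my z) : ℕ):ℝ)
            + δ * ((∑ z ∈ U, min (mx z) (my z) : ℕ):ℝ)) := by
      apply mul_lt_mul_of_pos_left _ hiFr
      have : (d1:ℝ) + (d2:ℝ) < δ * ((∑ z ∈ U, min (mx z) (my z) : ℕ):ℝ) :=
        lt_of_lt_of_le hPAr (mul_le_mul_of_nonneg_left hiASmr hδpos.le)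
      linarith
    have hSmr1 : (1:ℝ) ≤ ((∑ z ∈ U, min (mx z) (my z) : ℕ):ℝ) := by exact_mod_cast hSm1
    have c2 : (K:ℝ) * ((∑ z ∈ U, min (mx z) (my z) : ℕ):ℝ)
        < (((Fx ∩ Fy).card : ℝ) * (1 + δ)) * ((∑ z ∈ U, min (mx z) (my z) : ℕ):ℝ) := by
      calc (K:ℝ) * ((∑ z ∈ U, min (mx z) (my z) : ℕ):ℝ)
          ≤ ((Fx ∩ Fy).card : ℝ)
            * (((∑ z ∈ U, min (mx z) (my z) : ℕ):ℝ) + ((d1:ℝ) + (d2:ℝ))) := c0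
        _ < ((Fx ∩ Fy).card : ℝ)
            * (((∑ z ∈ U, min (mx z) (my z) : ℕ):ℝ)
              + δ * ((∑ z ∈ U, min (mx z) (my z) : ℕ):ℝ)) := c1
        _ = (((Fx ∩ Fy).card : ℝ) * (1 + δ)) * ((∑ z ∈ U, min (mx z) (my z) : ℕ):ℝ) := by
          ring
    exact lt_of_mul_lt_mul_right c2 (by linarith)
  -- final arithmetic
  have g2 : (N':ℝ) + 2*(K:ℝ)*δ ≤ ε' * (K:ℝ)/4 := by
    rw [hδ]
    linarith
  have hKlt2iF : (K:ℝ) < 2 * ((Fx ∩ Fy).card : ℝ) := by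
    have hδ1 : δ ≤ 1 := by rw [hδ]; linarith
    have hiFr1 : (1:ℝ) ≤ ((Fx ∩ Fy).card : ℝ) := by exact_mod_cast hiFpos
    nlinarith [hKr]
  have g3 : ε' * (K:ℝ)/4 < ε' * ((Fx ∩ Fy).card : ℝ) / 2 := by
    have := mul_lt_mul_of_pos_left hKlt2iF hε'pos
    linarith
  have g4 : ε' * ((Fx ∩ Fy).card : ℝ) / 2 ≤ ε * ((Fx ∩ Fy).card : ℝ) := by
    have h1 : (0:ℝ) ≤ ((Fx ∩ Fy).card : ℝ) := Nat.cast_nonneg _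
    have h2 : ε' * ((Fx ∩ Fy).card : ℝ) ≤ ε * ((Fx ∩ Fy).card : ℝ) :=
      mul_le_mul_of_nonneg_right hε'leε h1
    have h3 : (0:ℝ) ≤ ε' * ((Fx ∩ Fy).card : ℝ) := by positivity
    linarith
  calc ((symmDiff Fx Fy).card : ℝ) < (N' : ℝ) + 2*(K:ℝ)*δ := hkey1'
    _ ≤ ε' * (K:ℝ)/4 := g2
    _ < ε' * ((Fx ∩ Fy).card : ℝ) / 2 := g3
    _ ≤ ε * ((Fx ∩ Fy).card : ℝ) := g4


end NaiveAux

open NaiveAux Finset in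
set_option maxHeartbeats 4000000 in
theorem propertyA_implies_naivePropertyA (X : Type*) [MetricSpace X] [DecidableEq X]
    (hdisc : UniformlyDiscrete X) (hbg : BoundedGeometry X) (hA : HasPropertyA X) :
    ∀ R : ℝ, 0 < R → ∀ ε : ℝ, 0 < ε →
      ∃ (A : X → Finset X) (S : ℝ), 0 < S ∧
        (∀ x : X, (A x).Nonempty) ∧
        (∀ x y : X, dist x y ≤ R →
          ((symmDiff (A x) (A y)).card : ℝ) < ε * ((A x ∩ A y).card : ℝ)) ∧
        (∀ x : X, ∀ y ∈ A x, dist x y ≤ S) := by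
  intro R hR ε hε
  classical
  -- numeric parameters
  set ε' : ℝ := min ε 1 with hε'def
  have hε'pos : 0 < ε' := lt_min hε one_pos
  have hε'le1 : ε' ≤ 1 := min_le_right _ _
  have hε'leε : ε' ≤ ε := min_le_left _ _
  set δ : ℝ := ε' / 16 with hδdef
  have hδpos : 0 < δ := by positivity
  -- property A family
  obtain ⟨AA, S₀, hS₀, hne, hpair, hsupp⟩ := hA R hR δ hδpos
  -- ball finset functions
  obtain ⟨NR, hNR⟩ := hbg R hR
  set B : X → Finset X := fun z => (hNR z).1.toFinset with hBdef
  have hBmem : ∀ z w : X, w ∈ B z ↔ dist w z ≤ R := by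
    intro z w
    simp only [hBdef, Set.Finite.mem_toFinset, Metric.mem_closedBall]
  have hBself : ∀ z : X, z ∈ B z := fun z => (hBmem z z).2 (by simp [hR.le])
  have hBd : ∀ z w : X, w ∈ B z → dist z w ≤ R := by
    intro z w hw; rw [dist_comm]; exact (hBmem z w).1 hw
  -- support-ball bound
  obtain ⟨N', hN'⟩ := hbg (S₀ + R) (by positivity)
  set BU : X → Finset X := fun z => (hN' z).1.toFinset with hBUdef
  have hBUmem : ∀ z w : X, w ∈ BU z ↔ dist w z ≤ S₀ + R := by
    intro z w
    simp only [hBUdef, Set.Finite.mem_toFinset, Metric.mem_closedBall]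
  have hBUcard : ∀ z : X, (BU z).card ≤ N' := by
    intro z
    have := (hN' z).2
    rwa [Set.ncard_eq_toFinset_card _ (hN' z).1] at this
  -- the big constant K
  set M : ℕ := ⌈(8:ℝ)/ε'⌉₊ with hMdef
  set K : ℕ := (N' + 1) * M with hKdef
  have hMpos : 0 < M := Nat.ceil_pos.2 (by positivity)
  have hKpos : 0 < K := by positivity
  have hK8 : 8 * ((N':ℝ)+1) ≤ ε' * K := by
    have h1 : (8:ℝ)/ε' ≤ M := Nat.le_ceil _
    have h2 : (8:ℝ) ≤ ε' * M := by
      rw [div_le_iff₀ hε'pos] at h1; linarith [mul_comm (M:ℝ) ε']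
    have : ((K:ℕ):ℝ) = ((N':ℝ)+1) * M := by rw [hKdef]; push_cast; ring
    rw [this]
    calc 8 * ((N':ℝ)+1) = ((N':ℝ)+1) * 8 := by ring
      _ ≤ ((N':ℝ)+1) * (ε' * M) := by
          apply mul_le_mul_of_nonneg_left h2 (by positivity)
      _ = ε' * (((N':ℝ)+1) * M) := by ring
  -- local-disjointness scale
  obtain ⟨ND, hND⟩ := hbg (2*(S₀+R)) (by positivity)
  set BD : X → Finset X := fun z => (hND z).1.toFinset with hBDdef
  have hBDmem : ∀ z w : X, w ∈ BD z ↔ dist w z ≤ 2*(S₀+R) := by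
    intro z w
    simp only [hBDdef, Set.Finite.mem_toFinset, Metric.mem_closedBall]
  have hBDcard : ∀ z : X, (BD z).card ≤ ND := by
    intro z
    have := (hND z).2
    rwa [Set.ncard_eq_toFinset_card _ (hND z).1] at this
  set Q : ℕ := K * (ND + 1) with hQdef
  -- chain ball
  obtain ⟨NT, hNT⟩ := hbg ((Q:ℝ)*R + S₀) (by positivity)
  set BT : X → Finset X := fun z => (hNT z).1.toFinset with hBTdef
  have hBTmem : ∀ z w : X, w ∈ BT z ↔ dist w z ≤ (Q:ℝ)*R + S₀ := by
    intro z w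
    simp only [hBTdef, Set.Finite.mem_toFinset, Metric.mem_closedBall]
  -- multiplicity functions
  set mf : X → X → ℕ := fun w z => ((AA w).filter fun p => p.1 = z).card with hmfdef
  set nf : X → X → ℕ := fun w z => (K * mf w z + (AA w).card - 1) / (AA w).card with hnfdef
  set sp : X → Finset X := fun w => (AA w).image Prod.fst with hspdef
  set F : X → Finset X := fun w =>
    if (rchFn B Q w).card ≤ Q then rchFn B Q w
    else (sp w).biUnion fun z => Gtake (chainFn BT BD K z) (nf w z) with hFdef
  -- basic facts
  have hTpos : ∀ w : X, 0 < (AA w).card := fun w => Finset.card_pos.2 (hne w)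
  have hm_le : ∀ w z : X, mf w z ≤ (AA w).card := by
    intro w z; simp only [hmfdef]; exact Finset.card_filter_le _ _
  have hm0 : ∀ w z : X, z ∉ sp w → mf w z = 0 := by
    intro w z hz
    simp only [hmfdef]
    rw [Finset.card_eq_zero, Finset.filter_eq_empty_iff]
    intro p hp hpz
    apply hz
    simp only [hspdef, Finset.mem_image]
    exact ⟨p, hp, hpz⟩
  have hm_pos : ∀ w z : X, z ∈ sp w → 1 ≤ mf w z := by
    intro w z hz
    simp only [hspdef, Finset.mem_image] at hz
    obtain ⟨p, hp, hpz⟩ := hz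
    simp only [hmfdef]
    rw [Nat.one_le_iff_ne_zero, Ne, Finset.card_eq_zero, Finset.filter_eq_empty_iff]
    push_neg
    exact ⟨p, hp, hpz⟩
  have hn0 : ∀ w z : X, z ∉ sp w → nf w z = 0 := by
    intro w z hz
    simp only [hnfdef, hm0 w z hz, Nat.mul_zero]
    exact Nat.div_eq_of_lt (by have := hTpos w; omega)
  have hnK : ∀ w z : X, nf w z ≤ K := by
    intro w z
    simp only [hnfdef]
    have h1 : K * mf w z ≤ K * (AA w).card := Nat.mul_le_mul_left K (hm_le w z)
    have h2 := hTpos w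
    have h4 : (K+1) * (AA w).card = K * (AA w).card + (AA w).card := by ring
    have : K * mf w z + (AA w).card - 1 < (K+1) * (AA w).card := by omega
    have := Nat.div_lt_iff_lt_mul h2 |>.2 this
    omega
  have hnT_low : ∀ w z : X, K * mf w z ≤ nf w z * (AA w).card := by
    intro w z
    have h2 := hTpos w
    simp only [hnfdef]
    generalize K * mf w z = km
    have h1 := Nat.div_add_mod (km + (AA w).card - 1) ((AA w).card)
    have h3 := Nat.mod_lt (km + (AA w).card - 1) h2
    set q := (km + (AA w).card - 1) / (AA w).card with hq
    have h5 : (AA w).card * q = q * (AA w).card := Nat.mul_comm _ _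
    omega
  have hnT_hi : ∀ w z : X, nf w z * (AA w).card ≤ K * mf w z + (AA w).card := by
    intro w z
    simp only [hnfdef]
    have := Nat.div_mul_le_self (K * mf w z + (AA w).card - 1) ((AA w).card)
    omega
  have hn_pos : ∀ w z : X, z ∈ sp w → 1 ≤ nf w z := by
    intro w z hz
    by_contra h
    push_neg at h
    interval_cases h' : nf w z
    · have := hnT_low w z
      rw [h'] at this
      simp at this
      have h1 := hm_pos w z hz
      rcases this with h | h <;> omega
  have hsp_dist : ∀ w z : X, z ∈ sp w → dist w z ≤ S₀ := by
    intro w z hz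
    simp only [hspdef, Finset.mem_image] at hz
    obtain ⟨p, hp, hpz⟩ := hz
    subst hpz
    exact hsupp w p hp
  have hsp_ne : ∀ w : X, (sp w).Nonempty := by
    intro w; simp only [hspdef]; exact (hne w).image _
  -- room for chains
  have hroom : ∀ w : X, ¬((rchFn B Q w).card ≤ Q) → ∀ z : X, dist w z ≤ S₀ →
      (chainFn BT BD K z).length = K := by
    intro w hw z hz
    apply chainFn_length_eq
    have hsub : rchFn B Q w ⊆ BT z := by
      intro a ha
      rw [hBTmem]
      have h1 : dist w a ≤ (Q:ℝ) * R := rchFn_dist hBd hR.le Q w a ha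
      calc dist a z ≤ dist a w + dist w z := dist_triangle _ _ _
        _ ≤ (Q:ℝ)*R + S₀ := by rw [dist_comm a w]; exact add_le_add h1 hz
    have h2 : Q + 1 ≤ (BT z).card := le_trans (by omega) (Finset.card_le_card hsub)
    have h3 : (BD z).card * K ≤ ND * K := Nat.mul_le_mul_right K (hBDcard z)
    have h4 : K * (ND + 1) = ND * K + K := by ring
    omega
  -- bigness propagates to neighbours
  have hbig_of : ∀ w w' : X, dist w w' ≤ R → ¬((rchFn B Q w).card ≤ Q) →
      ¬((rchFn B Q w').card ≤ Q) := by
    intro w w' hd hw hw'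
    apply hw
    have := rchFn_eq_of_small hBself hw' ((hBmem w' w).2 hd)
      ((hBmem w w').2 (by rw [dist_comm]; exact hd))
    rw [this]
    exact hw'
  refine ⟨F, S₀ + ((Q:ℝ)*R + S₀) + (Q:ℝ)*R + 1, by positivity, ?_, ?_, ?_⟩
  · -- nonempty
    intro w
    by_cases hsml : (rchFn B Q w).card ≤ Q
    · have hFw : F w = rchFn B Q w := by simp only [hFdef]; rw [if_pos hsml]
      rw [hFw]
      exact ⟨w, rchFn_self hBself Q w⟩
    · have hFw : F w = (sp w).biUnion fun z => Gtake (chainFn BT BD K z) (nf w z) := by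
        simp only [hFdef]; rw [if_neg hsml]
      rw [hFw]
      obtain ⟨z₀, hz₀⟩ := hsp_ne w
      have hcard : (Gtake (chainFn BT BD K z₀) (nf w z₀)).card = nf w z₀ := by
        rw [Gtake_card (chainFn_nodup z₀), hroom w hsml z₀ (hsp_dist w z₀ hz₀),
          min_eq_left (hnK w z₀)]
      have : 0 < (Gtake (chainFn BT BD K z₀) (nf w z₀)).card := by
        rw [hcard]; exact hn_pos w z₀ hz₀
      obtain ⟨a, ha⟩ := Finset.card_pos.1 this
      exact ⟨a, Finset.mem_biUnion.2 ⟨z₀, hz₀, ha⟩⟩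
  · -- main estimate
    intro x y hxy
    by_cases hsml : (rchFn B Q x).card ≤ Q
    · -- small component: the two sets coincide
      have hEq : rchFn B Q y = rchFn B Q x :=
        rchFn_eq_of_small hBself hsml ((hBmem x y).2 (by rw [dist_comm]; exact hxy))
          ((hBmem y x).2 hxy)
      have hsml_y : (rchFn B Q y).card ≤ Q := by rw [hEq]; exact hsml
      have hFx : F x = rchFn B Q x := by simp only [hFdef]; rw [if_pos hsml]
      have hFy : F y = rchFn B Q x := by simp only [hFdef]; rw [if_pos hsml_y]; exact hEq
      rw [hFx, hFy, symmDiff_self, Finset.inter_self]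
      have h1 : 0 < (rchFn B Q x).card := Finset.card_pos.2 ⟨x, rchFn_self hBself Q x⟩
      have h2 : (0:ℝ) < ((rchFn B Q x).card : ℝ) := by exact_mod_cast h1
      have h3 : ((⊥ : Finset X).card : ℝ) = 0 := by simp
      rw [h3]
      exact mul_pos hε h2
    · -- big case
      have hbigy : ¬((rchFn B Q y).card ≤ Q) := hbig_of x y hxy hsml
      have hFx : F x = (sp x).biUnion fun z => Gtake (chainFn BT BD K z) (nf x z) := by
        simp only [hFdef]; rw [if_neg hsml]
      have hFy : F y = (sp y).biUnion fun z => Gtake (chainFn BT BD K z) (nf y z) := by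
        simp only [hFdef]; rw [if_neg hbigy]
      have hUx : ∀ z ∈ sp x ∪ sp y, dist x z ≤ S₀ + R := by
        intro z hz
        rcases Finset.mem_union.1 hz with hz | hz
        · linarith [hsp_dist x z hz, hR.le]
        · calc dist x z ≤ dist x y + dist y z := dist_triangle _ _ _
            _ ≤ R + S₀ := add_le_add hxy (hsp_dist y z hz)
            _ = S₀ + R := by ring
      have hUdisj : ∀ z ∈ sp x ∪ sp y, ∀ z' ∈ sp x ∪ sp y, z ≠ z' →
          Disjoint ((chainFn BT BD K z).toFinset) ((chainFn BT BD K z').toFinset) := by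
        intro z hz z' hz' hne'
        have hd : dist z z' ≤ 2*(S₀+R) := by
          calc dist z z' ≤ dist z x + dist x z' := dist_triangle _ _ _
            _ ≤ (S₀+R) + (S₀+R) := by
                rw [dist_comm z x]; exact add_le_add (hUx z hz) (hUx z' hz')
            _ = 2*(S₀+R) := by ring
        exact chainFn_disj hne' ((hBDmem z' z).2 hd)
          ((hBDmem z z').2 (by rw [dist_comm]; exact hd))
      have hlen : ∀ z ∈ sp x ∪ sp y, (chainFn BT BD K z).length = K := by
        intro z hz
        rcases Finset.mem_union.1 hz with hz | hz
        · exact hroom x hsml z (hsp_dist x z hz)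
        · exact hroom y hbigy z (hsp_dist y z hz)
      have hNu : (((sp x ∪ sp y).card : ℕ):ℝ) ≤ (N':ℝ) := by
        have hsubU : sp x ∪ sp y ⊆ BU x := fun z hz =>
          (hBUmem x z).2 (by rw [dist_comm]; exact hUx z hz)
        exact_mod_cast le_trans (Finset.card_le_card hsubU) (hBUcard x)
      -- fiberwise facts
      have hmemU_x : ∀ p ∈ AA x, p.1 ∈ sp x ∪ sp y := by
        intro p hp
        apply Finset.mem_union_left
        simp only [hspdef]
        exact Finset.mem_image_of_mem _ hp
      have hmemU_y : ∀ p ∈ AA y, p.1 ∈ sp x ∪ sp y := by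
        intro p hp
        apply Finset.mem_union_right
        simp only [hspdef]
        exact Finset.mem_image_of_mem _ hp
      have hfiby : (AA y).card = ∑ z ∈ sp x ∪ sp y, mf y z := by
        simp only [hmfdef]
        exact Finset.card_eq_sum_card_fiberwise hmemU_y
      have hfilter_sdiffxy : ∀ z : X, ((AA x \ AA y).filter fun p => p.1 = z)
          = ((AA x).filter fun p => p.1 = z) \ ((AA y).filter fun p => p.1 = z) := by
        intro z; ext p
        simp only [Finset.mem_sdiff, Finset.mem_filter]
        tauto
      have hfilter_sdiffyx : ∀ z : X, ((AA y \ AA x).filter fun p => p.1 = z)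
          = ((AA y).filter fun p => p.1 = z) \ ((AA x).filter fun p => p.1 = z) := by
        intro z; ext p
        simp only [Finset.mem_sdiff, Finset.mem_filter]
        tauto
      have hfilter_inter : ∀ z : X, ((AA x ∩ AA y).filter fun p => p.1 = z)
          = ((AA x).filter fun p => p.1 = z) ∩ ((AA y).filter fun p => p.1 = z) := by
        intro z; ext p
        simp only [Finset.mem_inter, Finset.mem_filter]
        tauto
      have hd1 : ∑ z ∈ sp x ∪ sp y, (mf x z - mf y z) ≤ (AA x \ AA y).card := by
        have hfib : (AA x \ AA y).card
            = ∑ z ∈ sp x ∪ sp y, ((AA x \ AA y).filter fun p => p.1 = z).card :=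
          Finset.card_eq_sum_card_fiberwise
            (fun p hp => hmemU_x p (Finset.mem_sdiff.1 hp).1)
        rw [hfib]
        refine Finset.sum_le_sum fun z _ => ?_
        rw [hfilter_sdiffxy z]
        simp only [hmfdef]
        exact Finset.le_card_sdiff _ _
      have hd2 : ∑ z ∈ sp x ∪ sp y, (mf y z - mf x z) ≤ (AA y \ AA x).card := by
        have hfib : (AA y \ AA x).card
            = ∑ z ∈ sp x ∪ sp y, ((AA y \ AA x).filter fun p => p.1 = z).card :=
          Finset.card_eq_sum_card_fiberwise
            (fun p hp => hmemU_y p (Finset.mem_sdiff.1 hp).1)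
        rw [hfib]
        refine Finset.sum_le_sum fun z _ => ?_
        rw [hfilter_sdiffyx z]
        simp only [hmfdef]
        exact Finset.le_card_sdiff _ _
      have hfibi : (AA x ∩ AA y).card ≤ ∑ z ∈ sp x ∪ sp y, min (mf x z) (mf y z) := by
        have hfib : (AA x ∩ AA y).card
            = ∑ z ∈ sp x ∪ sp y, ((AA x ∩ AA y).filter fun p => p.1 = z).card :=
          Finset.card_eq_sum_card_fiberwise
            (fun p hp => hmemU_x p (Finset.mem_inter.1 hp).1)
        rw [hfib]
        refine Finset.sum_le_sum fun z _ => ?_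
        rw [hfilter_inter z]
        simp only [hmfdef]
        exact le_min (Finset.card_le_card Finset.inter_subset_left)
          (Finset.card_le_card Finset.inter_subset_right)
      have hTd1 : (AA x).card = (AA x ∩ AA y).card + (AA x \ AA y).card :=
        (Finset.card_inter_add_card_sdiff _ _).symm
      have hTd2 : (AA y).card = (AA x ∩ AA y).card + (AA y \ AA x).card := by
        rw [Finset.inter_comm]
        exact (Finset.card_inter_add_card_sdiff _ _).symm
      have hPA := hpair x y hxy
      have hiApos : 0 < (AA x ∩ AA y).card := by
        rcases Nat.eq_zero_or_pos (AA x ∩ AA y).card with h | h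
        · rw [h] at hPA
          norm_num at hPA
          exact absurd hPA (not_lt.2 (Nat.cast_nonneg _))
        · exact h
      have hddlt : ((AA x \ AA y).card : ℝ) + ((AA y \ AA x).card : ℝ)
          < δ * ((AA x ∩ AA y).card : ℝ) := by
        have e : ((symmDiff (AA x) (AA y)).card : ℝ)
            = ((AA x \ AA y).card : ℝ) + ((AA y \ AA x).card : ℝ) := by
          rw [symmDiff_def, Finset.sup_eq_union,
            Finset.card_union_of_disjoint disjoint_sdiff_sdiff]
          push_cast
          ring
        rw [← e]
        exact hPA
      have hnxeq : ∀ z : X, nf x z = (K * mf x z + (AA x).card - 1) / (AA x).card := by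
        intro z; simp only [hnfdef]
      have hnyeq : ∀ z : X, nf y z = (K * mf y z + (AA y).card - 1) / (AA y).card := by
        intro z; simp only [hnfdef]
      exact bigcase ε ε' δ K N' hε'pos hε'leε hε'le1 hδdef hKpos hK8
        (sp x) (sp y) (sp x ∪ sp y) rfl hNu
        (mf x) (mf y) (nf x) (nf y) (AA x).card (AA y).card
        ((AA x \ AA y).card) ((AA y \ AA x).card) ((AA x ∩ AA y).card)
        (hTpos x) (hTpos y) (hm0 x) (hm0 y) hnxeq hnyeq
        (hm_le x) (hm_le y) hd1 hd2 hfibi hfiby.symm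
        (le_of_eq hTd1) (le_of_eq hTd2) (by omega) (by omega) hiApos hddlt
        (chainFn BT BD K) chainFn_nodup hlen hUdisj (F x) (F y) hFx hFy
  · -- distance bound
    intro w a ha
    by_cases hsml : (rchFn B Q w).card ≤ Q
    · have hFw : F w = rchFn B Q w := by simp only [hFdef]; rw [if_pos hsml]
      rw [hFw] at ha
      have := rchFn_dist hBd hR.le Q w a ha
      have h0 : (0:ℝ) ≤ (Q:ℝ)*R + S₀ := by positivity
      linarith [hS₀.le]
    · have hFw : F w = (sp w).biUnion fun z => Gtake (chainFn BT BD K z) (nf w z) := by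
        simp only [hFdef]; rw [if_neg hsml]
      rw [hFw] at ha
      obtain ⟨z, hz, haG⟩ := Finset.mem_biUnion.1 ha
      have h1 : a ∈ (chainFn BT BD K z).toFinset := Gtake_subset _ _ haG
      have h2 : a ∈ BT z := chainFn_mem_BT (List.mem_toFinset.1 h1)
      rw [hBTmem] at h2
      have h3 : dist w z ≤ S₀ := hsp_dist w z hz
      have h4 : (0:ℝ) ≤ (Q:ℝ)*R := by positivity
      calc dist w a ≤ dist w z + dist z a := dist_triangle _ _ _
        _ ≤ S₀ + ((Q:ℝ)*R + S₀) := by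
            rw [dist_comm z a]; exact add_le_add h3 h2
        _ ≤ S₀ + ((Q:ℝ)*R + S₀) + (Q:ℝ)*R + 1 := by linarith
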